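/- Let Σ be the signature with two unary operation symbols u, v, let A be the free Σ-algebra on one generator x (so A ≅ {u,v}* as a set, acting by prefixing), and let F X = ℕ × X be the endofunctor on Σ-algebras (where ℕ carries the algebra structure with both u and v interpreted as successor). Equip A with the F-coalgebra structure a determined on the generator by a(x) = (0, u(x)). Then the unique F-coalgebra morphism from A to the final F-coalgebra ℕ^ω (streams of naturals with head/tail and pointwise operations) sends u(x) and v(x) to the same stream (1,2,3,4,…), even though u(x) ≠ v(x) in A. -/
import Mathlib

lemma hval (h : List Bool → ℕ → ℕ)
    (h2 : ∀ w : List Bool, h w 0 = w.length)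
    (h3 : ∀ (w : List Bool) (i : ℕ), h w (i + 1) = h (w ++ [true]) i) :
    ∀ (i : ℕ) (w : List Bool), h w i = w.length + i := by
  intro i
  induction i with
  | zero => intro w; simpa using h2 w
  | succ n ih =>
      intro w
      rw [h3 w n, ih]
      simp [Nat.add_assoc, Nat.add_comm 1 n]
/-- In the variety of algebras with two unary operations `u`, `v` (encoded by prefixing
`true` resp. `false` to words in `List Bool`, the free algebra on one generator `x = []`),
consider the coalgebra for `F X = ℕ × X` determined by `a x = (0, u x)`, i.e.
`a w = (|w|, w ++ [true])`.  A coalgebra morphism into the final coalgebra of streams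
`ℕ → ℕ` (with pointwise successor as both operations and `⟨head, tail⟩` as structure)
is a function `h` satisfying the listed homomorphism and coalgebra-morphism equations.
There is a unique such `h`; it sends `u x = [true]` and `v x = [false]` to the same
stream `(1,2,3,…)`, although `u x ≠ v x` in the free algebra. -/
theorem free_coalgebra_morphism_merges_ux_vx :
    (∃! h : List Bool → ℕ → ℕ,
      (∀ (b : Bool) (w : List Bool) (i : ℕ), h (b :: w) i = h w i + 1) ∧
      (∀ w : List Bool, h w 0 = w.length) ∧
      (∀ (w : List Bool) (i : ℕ), h w (i + 1) = h (w ++ [true]) i)) ∧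
    (∀ h : List Bool → ℕ → ℕ,
      ((∀ (b : Bool) (w : List Bool) (i : ℕ), h (b :: w) i = h w i + 1) ∧
       (∀ w : List Bool, h w 0 = w.length) ∧
       (∀ (w : List Bool) (i : ℕ), h w (i + 1) = h (w ++ [true]) i)) →
      h [true] = h [false] ∧ ∀ i : ℕ, h [true] i = i + 1) ∧
    [true] ≠ [false] := by
  refine ⟨⟨fun w i => w.length + i, ⟨?_, ?_, ?_⟩, ?_⟩, ?_, ?_⟩
  · intro b w i; simp [Nat.add_right_comm]
  · intro w; simp
  · intro w i; simp; omega
  · intro h ⟨h1, h2, h3⟩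
    funext w i
    rw [hval h h2 h3]
  · intro h ⟨h1, h2, h3⟩
    constructor
    · funext i; rw [hval h h2 h3, hval h h2 h3]; rfl
    · intro i; rw [hval h h2 h3]; simp [Nat.add_comm]
  · simp
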